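/- Let m ≥ 2 and D, E, F ⊆ [m] with |D| = |E| = |F| = n where 0 ≤ n ≤ m−2. Then the Gray image Φ(C_L) is a binary linear code of length 2(2^m − 2^n)^3, with exactly 2^(3m) codewords (dimension 3m over Z_2), and minimum nonzero Hamming weight (2^m − 2^n)·2^m·(2^m − 2^(n+1)); moreover, if n ≥ 1 then Φ(C_L) is self-orthogonal. -/

import Mathlib

open Finset

/-- The ring Z_2[u] with u² = 0: dual numbers over Z_2. -/
abbrev R2 : Type := DualNumber (ZMod 2)

/-- The support of a vector in Z_2^m, as a finset of coordinates. -/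
def suppF {m : ℕ} (w : Fin m → ZMod 2) : Finset (Fin m) :=
  Finset.univ.filter fun i => w i ≠ 0

/-- Inner product ⟨x,y⟩ = Σ_i x_i y_i in Z_2. -/
def ip {m : ℕ} (x y : Fin m → ZMod 2) : ZMod 2 := ∑ i, x i * y i

/-- The defining set L = Δ_D^c × Δ_E^c × Δ_F^c, parametrized by triples (t₁,t₂,t₃). -/
def Lset (m : ℕ) (D E F : Finset (Fin m)) :
    Finset ((Fin m → ZMod 2) × (Fin m → ZMod 2) × (Fin m → ZMod 2)) :=
  Finset.univ.filter fun t => ¬ suppF t.1 ⊆ D ∧ ¬ suppF t.2.1 ⊆ E ∧ ¬ suppF t.2.2 ⊆ F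

/-- The codeword c_a = (a·l)_{l∈L} for a = (p, q+ur), where
a·l = ⟨q,t₂⟩ + u(⟨p,t₁⟩ + ⟨q,t₃⟩ + ⟨r,t₂⟩). -/
def cword {m : ℕ} (D E F : Finset (Fin m)) (p q r : Fin m → ZMod 2) :
    ↥(Lset m D E F) → R2 := fun l =>
  TrivSqZeroExt.inl (ip q l.val.2.1) +
    TrivSqZeroExt.inr (ip p l.val.1 + ip q l.val.2.2 + ip r l.val.2.1)

/-- Lee weight of a single element q + ur of Z_2[u]: wt_H(r) + wt_H(q+r). -/
def leeWtOne (x : R2) : ℕ :=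
  (if TrivSqZeroExt.snd x ≠ 0 then 1 else 0) +
    (if TrivSqZeroExt.fst x + TrivSqZeroExt.snd x ≠ 0 then 1 else 0)

/-- Lee weight of a vector over Z_2[u]: sum of coordinate Lee weights. -/
def leeWt {ι : Type} [Fintype ι] (c : ι → R2) : ℕ := ∑ i, leeWtOne (c i)

/-- The Gray map: coordinatewise q + ur ↦ (r, q + r). -/
def gray {ι : Type} (c : ι → R2) : ι ⊕ ι → ZMod 2 :=
  Sum.elim (fun i => TrivSqZeroExt.snd (c i))
    (fun i => TrivSqZeroExt.fst (c i) + TrivSqZeroExt.snd (c i))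

/-- The code C_L as a set of words over Z_2[u] indexed by L. -/
def CL (m : ℕ) (D E F : Finset (Fin m)) : Set (↥(Lset m D E F) → R2) :=
  { c | ∃ p q r : Fin m → ZMod 2, c = cword D E F p q r }

/-- The Gray image Φ(C_L), a binary code of length 2|L|. -/
def grayImage (m : ℕ) (D E F : Finset (Fin m)) :
    Set (↥(Lset m D E F) ⊕ ↥(Lset m D E F) → ZMod 2) :=
  { x | ∃ p q r : Fin m → ZMod 2, x = gray (cword D E F p q r) }

/-- Hamming weight of a binary word. -/
def hWtG {ι : Type} [Fintype ι] (x : ι → ZMod 2) : ℕ := ∑ i, if x i ≠ 0 then 1 else 0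

def Sc {m : ℕ} (S : Finset (Fin m)) : Finset (Fin m → ZMod 2) :=
  Finset.univ.filter fun t => ¬ suppF t ⊆ S

def chi (x : ZMod 2) : ℤ := 1 - 2 * x.val

lemma chi_add : ∀ x y : ZMod 2, chi (x + y) = chi x * chi y := by decide

lemma ip_add_left {m : ℕ} (x y t : Fin m → ZMod 2) :
    ip (x + y) t = ip x t + ip y t := by
  simp [ip, add_mul, Finset.sum_add_distrib]

lemma suppF_subset_iff {m : ℕ} (t : Fin m → ZMod 2) (S : Finset (Fin m)) :
    suppF t ⊆ S ↔ ∀ i, i ∉ S → t i = 0 := by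
  simp only [suppF, Finset.subset_iff, mem_filter, mem_univ, true_and]
  exact ⟨fun h i hi => by_contra fun hc => hi (h hc),
    fun h i hi => by_contra fun hc => hi (h i hc)⟩

lemma delta_eq {m : ℕ} (S : Finset (Fin m)) :
    (Finset.univ.filter fun t : Fin m → ZMod 2 => suppF t ⊆ S) =
      Fintype.piFinset (fun i => if i ∈ S then (Finset.univ : Finset (ZMod 2)) else {0}) := by
  ext t
  simp only [mem_filter, mem_univ, true_and, Fintype.mem_piFinset, suppF_subset_iff]
  constructor
  · intro h i
    by_cases hi : i ∈ S
    · simp [hi]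
    · simp [hi, h i hi]
  · intro h i hi
    have := h i
    simpa [hi] using this

lemma card_delta {m : ℕ} (S : Finset (Fin m)) :
    (Finset.univ.filter fun t : Fin m → ZMod 2 => suppF t ⊆ S).card = 2 ^ S.card := by
  rw [delta_eq, Fintype.card_piFinset]
  have : ∀ i : Fin m, (if i ∈ S then (Finset.univ : Finset (ZMod 2)) else {0}).card
      = if i ∈ S then 2 else 1 := by
    intro i; by_cases hi : i ∈ S <;> simp [hi]
  simp only [this]
  rw [Finset.prod_ite_mem, Finset.univ_inter, Finset.prod_const]

lemma card_Sc {m : ℕ} (S : Finset (Fin m)) : (Sc S).card = 2 ^ m - 2 ^ S.card := by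
  rw [Sc, Finset.filter_not, Finset.card_sdiff_of_subset (Finset.filter_subset _ _), card_delta]
  congr 1
  rw [Finset.card_univ, Fintype.card_fun, ZMod.card, Fintype.card_fin]

lemma chi_sum {ι : Type*} (s : Finset ι) (f : ι → ZMod 2) :
    chi (∑ i ∈ s, f i) = ∏ i ∈ s, chi (f i) := by
  induction s using Finset.cons_induction with
  | empty => simp [chi]
  | cons a s ha ih => rw [Finset.sum_cons, Finset.prod_cons, chi_add, ih]

lemma sum_chi_coord : ∀ a : ZMod 2,
    (∑ x : ZMod 2, chi (a * x)) = if a = 0 then 2 else 0 := by decide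

def sig {m : ℕ} (S : Finset (Fin m)) (v : Fin m → ZMod 2) : ℤ :=
  ∑ t ∈ Sc S, chi (ip v t)

lemma sum_chi_univ {m : ℕ} (v : Fin m → ZMod 2) :
    (∑ t : Fin m → ZMod 2, chi (ip v t)) = if v = 0 then 2 ^ m else 0 := by
  have h1 : ∀ t : Fin m → ZMod 2, chi (ip v t) = ∏ i, chi (v i * t i) := fun t =>
    chi_sum _ _
  simp only [h1]
  rw [← Fintype.piFinset_univ,
    ← Finset.prod_univ_sum (fun _ => (Finset.univ : Finset (ZMod 2))) (fun i z => chi (v i * z))]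
  simp only [sum_chi_coord]
  by_cases hv : v = 0
  · simp [hv, Finset.prod_const]
  · obtain ⟨i, hi⟩ : ∃ i, ¬ v i = 0 := by simpa [funext_iff] using hv
    rw [if_neg hv]
    exact Finset.prod_eq_zero (mem_univ i) (by simp [hi])

lemma sum_chi_delta {m : ℕ} (S : Finset (Fin m)) (v : Fin m → ZMod 2) :
    (∑ t ∈ Finset.univ.filter fun t : Fin m → ZMod 2 => suppF t ⊆ S, chi (ip v t)) =
      if ∀ i ∈ S, v i = 0 then 2 ^ S.card else 0 := by
  have h1 : ∀ t : Fin m → ZMod 2, chi (ip v t) = ∏ i, chi (v i * t i) := fun t =>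
    chi_sum _ _
  simp only [h1]
  rw [delta_eq, ← Finset.prod_univ_sum
    (fun i => if i ∈ S then (Finset.univ : Finset (ZMod 2)) else {0}) (fun i z => chi (v i * z))]
  have h2 : ∀ i : Fin m,
      (∑ x ∈ (if i ∈ S then (Finset.univ : Finset (ZMod 2)) else {0}), chi (v i * x)) =
      if i ∈ S then (if v i = 0 then 2 else 0) else 1 := by
    intro i
    by_cases hi : i ∈ S
    · simp only [hi, if_true]; exact sum_chi_coord (v i)
    · simp [hi, chi]
  simp only [h2]
  rw [Finset.prod_ite_mem, Finset.univ_inter]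
  by_cases hv : ∀ i ∈ S, v i = 0
  · rw [if_pos hv, Finset.prod_congr rfl (fun i hi => if_pos (hv i hi)), Finset.prod_const]
  · rw [if_neg hv]
    push_neg at hv
    obtain ⟨i, hi, hvi⟩ := hv
    exact Finset.prod_eq_zero hi (by simp [hvi])

lemma sig_eval {m : ℕ} (S : Finset (Fin m)) (v : Fin m → ZMod 2) :
    sig S v = (if v = 0 then 2 ^ m else 0) - (if ∀ i ∈ S, v i = 0 then 2 ^ S.card else 0) := by
  have := Finset.sum_filter_add_sum_filter_not Finset.univ
    (fun t : Fin m → ZMod 2 => suppF t ⊆ S) (fun t => chi (ip v t))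
  rw [sig, Sc]
  rw [sum_chi_delta] at this
  have h2 := sum_chi_univ v
  omega

lemma Lset_eq (m : ℕ) (D E F : Finset (Fin m)) :
    Lset m D E F = Sc D ×ˢ Sc E ×ˢ Sc F := by
  ext t
  obtain ⟨t1, t2, t3⟩ := t
  simp [Lset, Sc, Finset.mem_product, and_assoc]

lemma sum_L {β : Type*} [AddCommMonoid β] (m : ℕ) (D E F : Finset (Fin m))
    (φ : (Fin m → ZMod 2) × (Fin m → ZMod 2) × (Fin m → ZMod 2) → β) :
    (∑ l : ↥(Lset m D E F), φ l.val) =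
      ∑ t1 ∈ Sc D, ∑ t2 ∈ Sc E, ∑ t3 ∈ Sc F, φ (t1, (t2, t3)) := by
  rw [Finset.sum_coe_sort, Lset_eq, Finset.sum_product]
  exact Finset.sum_congr rfl fun t1 _ => Finset.sum_product _ _ _

lemma sum3 {X : Type*} (s1 s2 s3 : Finset X) (f g h : X → ℤ) :
    (∑ a ∈ s1, ∑ b ∈ s2, ∑ c ∈ s3, f a * g b * h c) =
      (∑ a ∈ s1, f a) * (∑ b ∈ s2, g b) * (∑ c ∈ s3, h c) := by
  conv_rhs => rw [Finset.sum_mul_sum]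
  rw [Finset.sum_mul]
  refine Finset.sum_congr rfl fun a _ => ?_
  rw [Finset.sum_mul]
  refine Finset.sum_congr rfl fun b _ => ?_
  rw [Finset.mul_sum]

lemma hWtG_gray (m : ℕ) (D E F : Finset (Fin m)) (c : ↥(Lset m D E F) → R2) :
    hWtG (gray c) = ∑ l : ↥(Lset m D E F),
      ((if (c l).snd ≠ 0 then 1 else 0) + (if (c l).fst + (c l).snd ≠ 0 then 1 else 0)) := by
  rw [hWtG, Fintype.sum_sum_type, ← Finset.sum_add_distrib]
  simp [gray]
  exact Finset.sum_congr rfl fun l _ => by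
    by_cases h1 : (c l).snd = 0 <;> by_cases h2 : (c l).fst + (c l).snd = 0 <;> simp [h1, h2]

lemma pointwise2 : ∀ f s : ZMod 2,
    (2 : ℤ) * (((if s ≠ 0 then 1 else 0) + (if f + s ≠ 0 then 1 else 0) : ℕ) : ℤ) =
      2 - chi s - chi (f + s) := by decide

lemma weight_formula (m : ℕ) (D E F : Finset (Fin m)) (p q r : Fin m → ZMod 2) :
    2 * (hWtG (gray (cword D E F p q r)) : ℤ) =
      2 * (Sc D).card * ((Sc E).card * (Sc F).card)
        - sig D p * sig E r * sig F q - sig D p * sig E (q + r) * sig F q := by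
  have key : ∀ l : ↥(Lset m D E F),
      (2 : ℤ) * ((if (cword D E F p q r l).snd ≠ 0 then 1 else 0) +
        (if (cword D E F p q r l).fst + (cword D E F p q r l).snd ≠ 0 then 1 else 0) : ℤ) =
      2 - chi (ip p l.val.1) * chi (ip r l.val.2.1) * chi (ip q l.val.2.2)
        - chi (ip p l.val.1) * chi (ip (q + r) l.val.2.1) * chi (ip q l.val.2.2) := by
    intro l
    have hfst : (cword D E F p q r l).fst = ip q l.val.2.1 := by simp [cword]
    have hsnd : (cword D E F p q r l).snd =
        ip p l.val.1 + ip q l.val.2.2 + ip r l.val.2.1 := by simp [cword]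
    have hp2 := pointwise2 (cword D E F p q r l).fst (cword D E F p q r l).snd
    push_cast at hp2
    rw [hp2, hfst, hsnd]
    have e2 : ip q l.val.2.1 + (ip p l.val.1 + ip q l.val.2.2 + ip r l.val.2.1) =
        ip p l.val.1 + (ip (q + r) l.val.2.1 + ip q l.val.2.2) := by
      rw [ip_add_left]; ring
    have e1 : ip p l.val.1 + ip q l.val.2.2 + ip r l.val.2.1 =
        ip p l.val.1 + (ip r l.val.2.1 + ip q l.val.2.2) := by ring
    rw [e2, e1, chi_add, chi_add, chi_add, chi_add]
    ring
  have step1 : 2 * (hWtG (gray (cword D E F p q r)) : ℤ) =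
      ∑ l : ↥(Lset m D E F),
        (fun t : (Fin m → ZMod 2) × (Fin m → ZMod 2) × (Fin m → ZMod 2) =>
          (2 : ℤ) - chi (ip p t.1) * chi (ip r t.2.1) * chi (ip q t.2.2)
            - chi (ip p t.1) * chi (ip (q + r) t.2.1) * chi (ip q t.2.2)) l.val := by
    rw [hWtG_gray]
    push_cast
    rw [Finset.mul_sum]
    exact Finset.sum_congr rfl fun l _ => key l
  rw [step1, sum_L m D E F
    (fun t : (Fin m → ZMod 2) × (Fin m → ZMod 2) × (Fin m → ZMod 2) =>
      (2 : ℤ) - chi (ip p t.1) * chi (ip r t.2.1) * chi (ip q t.2.2)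
        - chi (ip p t.1) * chi (ip (q + r) t.2.1) * chi (ip q t.2.2))]
  simp only [Finset.sum_sub_distrib, Finset.sum_const, nsmul_eq_mul]
  rw [sum3, sum3]
  simp only [sig]
  push_cast
  ring


lemma sig_cases {m n : ℕ} (S : Finset (Fin m)) (hS : S.card = n) (v : Fin m → ZMod 2) :
    sig S v = 2 ^ m - 2 ^ n ∨ sig S v = -(2 ^ n) ∨ sig S v = 0 := by
  rw [sig_eval, hS]
  by_cases h0 : v = 0
  · left
    rw [if_pos h0, if_pos (fun i _ => by rw [h0]; rfl)]
  · by_cases hc : ∀ i ∈ S, v i = 0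
    · right; left; rw [if_neg h0, if_pos hc]; ring
    · right; right; rw [if_neg h0, if_neg hc]; ring

lemma sig_zero {m n : ℕ} (S : Finset (Fin m)) (hS : S.card = n) :
    sig S (0 : Fin m → ZMod 2) = 2 ^ m - 2 ^ n := by
  rw [sig_eval, hS, if_pos rfl]
  simp

lemma sig_nonpos {m : ℕ} (S : Finset (Fin m)) (v : Fin m → ZMod 2) (hv : v ≠ 0) :
    sig S v ≤ 0 := by
  rw [sig_eval, if_neg hv]
  have : (0:ℤ) ≤ 2 ^ S.card := by positivity
  split <;> linarith

set_option maxHeartbeats 2000000 in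
lemma keyineq (k K : ℤ) (hk : 0 < k) (hK : 0 ≤ K) (a b g s : ℤ)
    (ha : a = K ∨ a = -k ∨ a = 0) (hb : b = K ∨ b = -k ∨ b = 0)
    (hg : g = K ∨ g = -k ∨ g = 0) (hs : s = K ∨ s = -k ∨ s = 0)
    (h1 : a = K → b = K → g + s ≤ 0) :
    a * b * (g + s) ≤ 2 * k ^ 2 * K := by
  have hkK : 0 ≤ k * K := mul_nonneg hk.le hK
  have hkkK : 0 ≤ k * k * K := mul_nonneg (mul_nonneg hk.le hk.le) hK
  have hKKk : 0 ≤ K * K * k := mul_nonneg (mul_nonneg hK hK) hk.le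
  have hKK : 0 ≤ K * K := mul_nonneg hK hK
  rcases ha with rfl | rfl | rfl <;> rcases hb with rfl | rfl | rfl <;>
    rcases hg with rfl | rfl | rfl <;> rcases hs with rfl | rfl | rfl <;>
    first
      | (nlinarith [h1 rfl rfl])
      | nlinarith

lemma weight_lb (m n : ℕ) (hmn : n + 2 ≤ m) (D E F : Finset (Fin m))
    (hD : D.card = n) (hE : E.card = n) (hF : F.card = n) (p q r : Fin m → ZMod 2)
    (hnz : ¬(p = 0 ∧ q = 0 ∧ r = 0)) :
    (2 ^ m - 2 ^ n) * 2 ^ m * (2 ^ m - 2 ^ (n + 1)) ≤ hWtG (gray (cword D E F p q r)) := by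
  have h1 : (2:ℕ) ^ n ≤ 2 ^ m := Nat.pow_le_pow_right (by norm_num) (by omega)
  have h2 : (2:ℕ) ^ (n+1) ≤ 2 ^ m := Nat.pow_le_pow_right (by norm_num) (by omega)
  have hKpos : (0:ℤ) < 2 ^ m - 2 ^ n := by
    have : (2:ℤ) ^ n < 2 ^ m := by
      have := Nat.pow_lt_pow_right (a := 2) (by norm_num) (show n < m by omega)
      exact_mod_cast this
    linarith
  have hwf := weight_formula m D E F p q r
  rw [card_Sc, card_Sc, card_Sc, hD, hE, hF] at hwf
  have hcast : (((2:ℕ) ^ m - 2 ^ n : ℕ) : ℤ) = 2 ^ m - 2 ^ n := by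
    push_cast [Nat.cast_sub h1]; ring
  rw [hcast] at hwf
  have ha := sig_cases D hD p
  have hb := sig_cases F hF q
  have hg := sig_cases E hE r
  have hs := sig_cases E hE (q + r)
  have himp : sig D p = 2 ^ m - 2 ^ n → sig F q = 2 ^ m - 2 ^ n →
      sig E r + sig E (q + r) ≤ 0 := by
    intro hap hbq
    have hp0 : p = 0 := by
      by_contra hp
      have := sig_nonpos D p hp
      omega
    have hq0 : q = 0 := by
      by_contra hq
      have := sig_nonpos F q hq
      omega
    have hr0 : r ≠ 0 := fun hr => hnz ⟨hp0, hq0, hr⟩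
    have hqr : q + r ≠ 0 := by rw [hq0, zero_add]; exact hr0
    have := sig_nonpos E r hr0
    have := sig_nonpos E (q + r) hqr
    linarith
  have hki := keyineq (2 ^ n) (2 ^ m - 2 ^ n) (by positivity) hKpos.le
    (sig D p) (sig F q) (sig E r) (sig E (q + r)) ha hb hg hs himp
  have hgoal : (((2 ^ m - 2 ^ n) * 2 ^ m * (2 ^ m - 2 ^ (n + 1)) : ℕ) : ℤ) ≤
      (hWtG (gray (cword D E F p q r)) : ℤ) := by
    push_cast [Nat.cast_sub h1, Nat.cast_sub h2]
    have hexp : sig D p * sig E r * sig F q + sig D p * sig E (q + r) * sig F q =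
        sig D p * sig F q * (sig E r + sig E (q + r)) := by ring
    have hid : 2 * ((2 ^ m - 2 ^ n) * 2 ^ m * (2 ^ m - 2 ^ (n + 1)) : ℤ) =
        2 * (2 ^ m - 2 ^ n) * ((2 ^ m - 2 ^ n) * (2 ^ m - 2 ^ n))
          - 2 * (2 ^ n) ^ 2 * (2 ^ m - 2 ^ n) := by ring
    linarith
  exact_mod_cast hgoal

lemma hWtG_zero {ι : Type} [Fintype ι] : hWtG (0 : ι → ZMod 2) = 0 := by
  simp [hWtG]

lemma cword_add {m : ℕ} (D E F : Finset (Fin m)) (p q r p' q' r' : Fin m → ZMod 2) :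
    cword D E F (p + p') (q + q') (r + r') = cword D E F p q r + cword D E F p' q' r' := by
  funext l
  refine TrivSqZeroExt.ext ?_ ?_ <;>
    simp [cword, ip_add_left] <;> ring

lemma gray_add {ι : Type} (c c' : ι → R2) : gray (c + c') = gray c + gray c' := by
  funext i
  cases i <;> simp [gray] <;> ring

lemma zmodfun_add_self {ι : Type*} (v : ι → ZMod 2) : v + v = 0 := by
  funext i
  simp only [Pi.add_apply]
  exact CharTwo.add_self_eq_zero _

lemma zmodfun_eq_of_add_eq_zero {ι : Type*} (v w : ι → ZMod 2) (h : v + w = 0) : v = w := by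
  have : v + (w + w) = 0 + w := by rw [← add_assoc, h]
  rwa [zmodfun_add_self, add_zero, zero_add] at this


lemma gray_cword_zero (m : ℕ) (D E F : Finset (Fin m)) :
    gray (cword D E F 0 0 0) = 0 := by
  funext i
  have hc : cword D E F 0 0 0 = 0 := by
    funext l
    refine TrivSqZeroExt.ext ?_ ?_ <;> simp [cword, ip]
  rw [hc]
  cases i <;> simp [gray]

lemma weight_attained (m n : ℕ) (hmn : n + 2 ≤ m) (D E F : Finset (Fin m))
    (hD : D.card = n) (hE : E.card = n) (hF : F.card = n) (i j : Fin m)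
    (hi : i ∉ D) (hj : j ∉ E) :
    hWtG (gray (cword D E F (fun x => if x = i then 1 else 0) 0
        (fun x => if x = j then 1 else 0))) =
      (2 ^ m - 2 ^ n) * 2 ^ m * (2 ^ m - 2 ^ (n + 1)) := by
  have h1 : (2:ℕ) ^ n ≤ 2 ^ m := Nat.pow_le_pow_right (by norm_num) (by omega)
  have h2 : (2:ℕ) ^ (n+1) ≤ 2 ^ m := Nat.pow_le_pow_right (by norm_num) (by omega)
  have hcast : (((2:ℕ) ^ m - 2 ^ n : ℕ) : ℤ) = 2 ^ m - 2 ^ n := by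
    push_cast [Nat.cast_sub h1]; ring
  have hwf := weight_formula m D E F (fun x => if x = i then 1 else 0) 0
    (fun x => if x = j then 1 else 0)
  rw [card_Sc, card_Sc, card_Sc, hD, hE, hF, hcast] at hwf
  have hsp : sig D (fun x => if x = i then (1 : ZMod 2) else 0) = -(2 ^ n) := by
    have hne : ¬ ((fun x => if x = i then (1 : ZMod 2) else 0) = 0) := by
      intro h
      have := congrFun h i
      simp at this
    have hcond : ∀ x ∈ D, (fun x => if x = i then (1 : ZMod 2) else 0) x = 0 := by
      intro x hx
      simp only
      rw [if_neg (fun h : x = i => hi (h ▸ hx))]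
    rw [sig_eval, hD, if_neg hne, if_pos hcond]
    ring
  have hsr : sig E (fun x => if x = j then (1 : ZMod 2) else 0) = -(2 ^ n) := by
    have hne : ¬ ((fun x => if x = j then (1 : ZMod 2) else 0) = 0) := by
      intro h
      have := congrFun h j
      simp at this
    have hcond : ∀ x ∈ E, (fun x => if x = j then (1 : ZMod 2) else 0) x = 0 := by
      intro x hx
      simp only
      rw [if_neg (fun h : x = j => hj (h ▸ hx))]
    rw [sig_eval, hE, if_neg hne, if_pos hcond]
    ring
  have hsq : sig F (0 : Fin m → ZMod 2) = 2 ^ m - 2 ^ n := sig_zero F hF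
  have hsqr : sig E ((0 : Fin m → ZMod 2) + fun x => if x = j then 1 else 0) = -(2 ^ n) := by
    rw [zero_add]; exact hsr
  rw [hsp, hsr, hsq, hsqr] at hwf
  have hfin : (2 : ℤ) * (hWtG (gray (cword D E F (fun x => if x = i then 1 else 0) 0
      (fun x => if x = j then 1 else 0))) : ℤ) =
      2 * (((2 ^ m - 2 ^ n) * 2 ^ m * (2 ^ m - 2 ^ (n + 1)) : ℕ) : ℤ) := by
    rw [hwf]
    push_cast [Nat.cast_sub h1, Nat.cast_sub h2]
    ring
  have := mul_left_cancel₀ (two_ne_zero' ℤ) hfin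
  exact_mod_cast this

lemma so_pointwise : ∀ f a b c f' a' b' c' : ZMod 2,
    (a + b + c) * (a' + b' + c') + (f + (a + b + c)) * (f' + (a' + b' + c')) =
      ((f * f' + f * c' + c * f') + (f * a' + a * f')) + (f * b' + b * f') := by
  decide

/-- for |D| = |E| = |F| = n ≤ m−2, Φ(C_L) is a binary linear code of
length 2(2^m − 2^n)³, with 2^(3m) codewords, minimum nonzero Hamming weight
(2^m − 2^n)·2^m·(2^m − 2^(n+1)); if moreover n ≥ 1 it is self-orthogonal. -/
theorem stmt19 (m n : ℕ) (hm : 2 ≤ m) (hn : n ≤ m - 2) (D E F : Finset (Fin m))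
    (hD : D.card = n) (hE : E.card = n) (hF : F.card = n) :
    Fintype.card (↥(Lset m D E F) ⊕ ↥(Lset m D E F)) = 2 * (2 ^ m - 2 ^ n) ^ 3 ∧
    Nat.card (grayImage m D E F) = 2 ^ (3 * m) ∧
    IsLeast {w : ℕ | ∃ x ∈ grayImage m D E F, x ≠ 0 ∧ hWtG x = w}
      ((2 ^ m - 2 ^ n) * 2 ^ m * (2 ^ m - 2 ^ (n + 1))) ∧
    (1 ≤ n →
      ∀ x ∈ grayImage m D E F, ∀ y ∈ grayImage m D E F, ∑ i, x i * y i = 0) := by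
  have hm2 : n + 2 ≤ m := by omega
  have h2nm : (2:ℕ) ^ n < 2 ^ m := Nat.pow_lt_pow_right (by norm_num) (by omega)
  have h2nm1 : (2:ℕ) ^ (n+1) < 2 ^ m := Nat.pow_lt_pow_right (by norm_num) (by omega)
  have hWpos : 0 < (2 ^ m - 2 ^ n) * 2 ^ m * (2 ^ m - 2 ^ (n + 1)) := by
    have := Nat.sub_pos_of_lt h2nm
    have := Nat.sub_pos_of_lt h2nm1
    have : 0 < (2:ℕ) ^ m := by positivity
    apply Nat.mul_pos (Nat.mul_pos (Nat.sub_pos_of_lt h2nm) this) (Nat.sub_pos_of_lt h2nm1)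
  have hker : ∀ p q r : Fin m → ZMod 2, gray (cword D E F p q r) = 0 →
      p = 0 ∧ q = 0 ∧ r = 0 := by
    intro p q r h0
    by_contra hnz
    have := weight_lb m n hm2 D E F hD hE hF p q r hnz
    rw [h0, hWtG_zero] at this
    omega
  refine ⟨?_, ?_, ⟨?_, ?_⟩, ?_⟩
  · -- length
    rw [Fintype.card_sum, Fintype.card_coe, Lset_eq, Finset.card_product,
      Finset.card_product, card_Sc, card_Sc, card_Sc, hD, hE, hF]
    ring
  · -- number of codewords
    have himg : grayImage m D E F = Set.range
        (fun v : (Fin m → ZMod 2) × (Fin m → ZMod 2) × (Fin m → ZMod 2) =>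
          gray (cword D E F v.1 v.2.1 v.2.2)) := by
      ext x
      constructor
      · rintro ⟨p, q, r, rfl⟩; exact ⟨(p, q, r), rfl⟩
      · rintro ⟨⟨p, q, r⟩, rfl⟩; exact ⟨p, q, r, rfl⟩
    have hinj : Function.Injective
        (fun v : (Fin m → ZMod 2) × (Fin m → ZMod 2) × (Fin m → ZMod 2) =>
          gray (cword D E F v.1 v.2.1 v.2.2)) := by
      rintro ⟨p, q, r⟩ ⟨p', q', r'⟩ h
      simp only at h
      have hzero : gray (cword D E F (p + p') (q + q') (r + r')) = 0 := by
        rw [cword_add, gray_add, h]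
        exact zmodfun_add_self _
      obtain ⟨hp, hq, hr⟩ := hker _ _ _ hzero
      exact Prod.ext (zmodfun_eq_of_add_eq_zero _ _ hp)
        (Prod.ext (zmodfun_eq_of_add_eq_zero _ _ hq) (zmodfun_eq_of_add_eq_zero _ _ hr))
    rw [himg, Nat.card_range_of_injective hinj, Nat.card_eq_fintype_card]
    rw [Fintype.card_prod, Fintype.card_prod, Fintype.card_fun, ZMod.card,
      Fintype.card_fin, show 3 * m = m + (m + m) from by ring, pow_add, pow_add]
  · -- membership : minimum weight attained
    have hiD : ∃ i, i ∉ D := by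
      by_contra h
      push_neg at h
      have : D = Finset.univ := Finset.eq_univ_iff_forall.2 h
      rw [this, Finset.card_univ, Fintype.card_fin] at hD
      omega
    have hjE : ∃ j, j ∉ E := by
      by_contra h
      push_neg at h
      have : E = Finset.univ := Finset.eq_univ_iff_forall.2 h
      rw [this, Finset.card_univ, Fintype.card_fin] at hE
      omega
    obtain ⟨i, hi⟩ := hiD
    obtain ⟨j, hj⟩ := hjE
    have hw := weight_attained m n hm2 D E F hD hE hF i j hi hj
    refine ⟨gray (cword D E F (fun x => if x = i then 1 else 0) 0
      (fun x => if x = j then 1 else 0)), ⟨_, _, _, rfl⟩, ?_, hw⟩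
    intro h0
    rw [h0, hWtG_zero] at hw
    omega
  · -- lower bound
    rintro w ⟨x, ⟨p, q, r, rfl⟩, hxne, rfl⟩
    refine weight_lb m n hm2 D E F hD hE hF p q r ?_
    rintro ⟨rfl, rfl, rfl⟩
    exact hxne (gray_cword_zero m D E F)
  · -- self-orthogonality
    intro hn1 x hx y hy
    obtain ⟨p, q, r, rfl⟩ := hx
    obtain ⟨p', q', r', rfl⟩ := hy
    have hcard0 : ∀ S : Finset (Fin m), S.card = n → (((Sc S).card : ℕ) : ZMod 2) = 0 := by
      intro S hS
      rw [card_Sc, hS]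
      have hdvd : 2 ∣ 2 ^ m - 2 ^ n :=
        Nat.dvd_sub (dvd_pow_self 2 (by omega)) (dvd_pow_self 2 (by omega))
      exact (ZMod.natCast_eq_zero_iff _ 2).mpr hdvd
    have hSD0 := hcard0 D hD
    have hSF0 := hcard0 F hF
    rw [Fintype.sum_sum_type, ← Finset.sum_add_distrib]
    have key : ∀ l : ↥(Lset m D E F),
        gray (cword D E F p q r) (Sum.inl l) * gray (cword D E F p' q' r') (Sum.inl l) +
        gray (cword D E F p q r) (Sum.inr l) * gray (cword D E F p' q' r') (Sum.inr l) =
        (fun t : (Fin m → ZMod 2) × (Fin m → ZMod 2) × (Fin m → ZMod 2) =>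
          ((ip q t.2.1 * ip q' t.2.1 + ip q t.2.1 * ip r' t.2.1 + ip r t.2.1 * ip q' t.2.1) +
            (ip q t.2.1 * ip p' t.1 + ip p t.1 * ip q' t.2.1)) +
          (ip q t.2.1 * ip q' t.2.2 + ip q t.2.2 * ip q' t.2.1)) l.val := by
      intro l
      have hf : (cword D E F p q r l).fst = ip q l.val.2.1 := by simp [cword]
      have hs : (cword D E F p q r l).snd =
          ip p l.val.1 + ip q l.val.2.2 + ip r l.val.2.1 := by simp [cword]
      have hf' : (cword D E F p' q' r' l).fst = ip q' l.val.2.1 := by simp [cword]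
      have hs' : (cword D E F p' q' r' l).snd =
          ip p' l.val.1 + ip q' l.val.2.2 + ip r' l.val.2.1 := by simp [cword]
      simp only [gray, Sum.elim_inl, Sum.elim_inr, hf, hs, hf', hs']
      have := so_pointwise (ip q l.val.2.1) (ip p l.val.1) (ip q l.val.2.2) (ip r l.val.2.1)
        (ip q' l.val.2.1) (ip p' l.val.1) (ip q' l.val.2.2) (ip r' l.val.2.1)
      exact this
    rw [Finset.sum_congr rfl fun l _ => key l]
    rw [sum_L m D E F
      (fun t : (Fin m → ZMod 2) × (Fin m → ZMod 2) × (Fin m → ZMod 2) =>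
        ((ip q t.2.1 * ip q' t.2.1 + ip q t.2.1 * ip r' t.2.1 + ip r t.2.1 * ip q' t.2.1) +
          (ip q t.2.1 * ip p' t.1 + ip p t.1 * ip q' t.2.1)) +
        (ip q t.2.1 * ip q' t.2.2 + ip q t.2.2 * ip q' t.2.1))]
    have step1 : ∀ t1, ∀ t2, (∑ t3 ∈ Sc F,
        (((ip q t2 * ip q' t2 + ip q t2 * ip r' t2 + ip r t2 * ip q' t2) +
          (ip q t2 * ip p' t1 + ip p t1 * ip q' t2)) +
          (ip q t2 * ip q' t3 + ip q t3 * ip q' t2))) =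
        ∑ t3 ∈ Sc F, (ip q t2 * ip q' t3 + ip q t3 * ip q' t2) := by
      intro t1 t2
      rw [Finset.sum_add_distrib, Finset.sum_const, nsmul_eq_mul, hSF0, zero_mul, zero_add]
    rw [Finset.sum_congr rfl fun t1 _ => Finset.sum_congr rfl fun t2 _ => step1 t1 t2]
    rw [Finset.sum_const, nsmul_eq_mul, hSD0, zero_mul]
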